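/- Let n ≥ n', let A be a real symmetric n×n matrix, A' a real symmetric n'×n' matrix, K a real n×n' matrix, λ ≥ 0, α ∈ [0,1], and ε > 0 with ‖A‖₂·‖A'‖₂ < ε. Then the FastPFP iteration map T(X) = (1−α)X + α·P_d(A X A' + λK) is Lipschitz continuous with Lipschitz constant 1−α+αε with respect to the Frobenius norm; moreover, if α > 0 and ε < 1, then T has a unique fixed point X* and the iterates Tᵗ(X⁽⁰⁾) converge to X* for every initial matrix X⁽⁰⁾. -/

import Mathlib

set_option linter.unusedSectionVars false


/-- The Frobenius norm of a real matrix. -/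
noncomputable def frobNorm {m p : Type*} [Fintype m] [Fintype p] (A : Matrix m p ℝ) : ℝ :=
  Real.sqrt (∑ i, ∑ j, (A i j) ^ 2)

/-- The spectral (ℓ₂ operator) norm of a real square matrix. -/
noncomputable def specNorm {m : Type*} [Fintype m] [DecidableEq m] (A : Matrix m m ℝ) : ℝ :=
  ‖Matrix.toEuclideanCLM (𝕜 := ℝ) A‖

/-- `Omega n n'` is the set of partial doubly stochastic matrices: real `n × n'` matrices
with row sums at most 1, column sums equal to 1, and nonnegative entries. -/
def Omega (n n' : ℕ) : Set (Matrix (Fin n) (Fin n') ℝ) :=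
  {X | (∀ i, ∑ j, X i j ≤ 1) ∧ (∀ j, ∑ i, X i j = 1) ∧ (∀ i j, 0 ≤ X i j)}

namespace FastPFPAux

open Matrix Filter

variable {m p : Type*} [Fintype m] [Fintype p]

/-- The identification between matrices and Euclidean space. -/
noncomputable def eM (X : Matrix m p ℝ) : EuclideanSpace ℝ (m × p) :=
  (WithLp.equiv 2 _).symm (fun q => X q.1 q.2)

/-- The inverse identification. -/
noncomputable def eM' (y : EuclideanSpace ℝ (m × p)) : Matrix m p ℝ :=
  Matrix.of fun i j => (WithLp.equiv 2 _) y (i, j)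

lemma eM_eM' (y : EuclideanSpace ℝ (m × p)) : eM (eM' y) = y := rfl

lemma eM'_eM (X : Matrix m p ℝ) : eM' (eM X) = X := rfl

lemma eM_sub (X Y : Matrix m p ℝ) : eM (X - Y) = eM X - eM Y := rfl

lemma eM_add (X Y : Matrix m p ℝ) : eM (X + Y) = eM X + eM Y := rfl

lemma eM_smul (c : ℝ) (X : Matrix m p ℝ) : eM (c • X) = c • eM X := rfl

lemma frob_eq (X : Matrix m p ℝ) : frobNorm X = ‖eM X‖ := by
  rw [EuclideanSpace.norm_eq, frobNorm]
  congr 1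
  rw [Fintype.sum_prod_type]
  simp [eM, Real.norm_eq_abs, sq_abs]

lemma frob_nonneg (X : Matrix m p ℝ) : 0 ≤ frobNorm X := Real.sqrt_nonneg _

lemma frob_transpose (X : Matrix m p ℝ) : frobNorm Xᵀ = frobNorm X := by
  rw [frobNorm, frobNorm, Finset.sum_comm]
  rfl

variable [DecidableEq m]

lemma specNorm_nonneg (A : Matrix m m ℝ) : 0 ≤ specNorm A := norm_nonneg _

lemma norm_mulVec_le (A : Matrix m m ℝ) (v : EuclideanSpace ℝ m) :
    ‖((WithLp.equiv 2 _).symm (A *ᵥ (WithLp.equiv 2 _ v)) : EuclideanSpace ℝ m)‖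
      ≤ specNorm A * ‖v‖ := by
  have h := (Matrix.toEuclideanCLM (𝕜 := ℝ) A).le_opNorm v
  have e1 : Matrix.toEuclideanCLM (𝕜 := ℝ) A v
      = (WithLp.equiv 2 _).symm (A *ᵥ (WithLp.equiv 2 _ v)) := by
    conv_lhs => rw [← (WithLp.equiv 2 _).symm_apply_apply v]
    rfl
  rw [← e1]
  exact h

lemma sum_sq_mulVec_le (A : Matrix m m ℝ) (v : m → ℝ) :
    ∑ i, (A *ᵥ v) i ^ 2 ≤ specNorm A ^ 2 * ∑ i, v i ^ 2 := by
  have h := norm_mulVec_le A ((WithLp.equiv 2 _).symm v)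
  rw [EuclideanSpace.norm_eq, EuclideanSpace.norm_eq] at h
  have h1 : ∀ w : m → ℝ, ∑ i, ‖((WithLp.equiv 2 (m → ℝ)).symm w : EuclideanSpace ℝ m) i‖ ^ 2
      = ∑ i, w i ^ 2 := by
    intro w
    simp [Real.norm_eq_abs, sq_abs]
  rw [(WithLp.equiv 2 _).apply_symm_apply, h1, h1] at h
  have hnn1 : (0:ℝ) ≤ ∑ i, (A *ᵥ v) i ^ 2 := Finset.sum_nonneg fun i _ => sq_nonneg _
  have hnn2 : (0:ℝ) ≤ ∑ i, v i ^ 2 := Finset.sum_nonneg fun i _ => sq_nonneg _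
  have := mul_self_le_mul_self (Real.sqrt_nonneg (∑ i, (A *ᵥ v) i ^ 2)) h
  rw [Real.mul_self_sqrt hnn1] at this
  calc ∑ i, (A *ᵥ v) i ^ 2
      ≤ (specNorm A * Real.sqrt (∑ i, v i ^ 2)) * (specNorm A * Real.sqrt (∑ i, v i ^ 2)) := this
    _ = specNorm A ^ 2 * ∑ i, v i ^ 2 := by
        rw [mul_mul_mul_comm, Real.mul_self_sqrt hnn2]; ring

lemma frob_mul_left (A : Matrix m m ℝ) (Y : Matrix m p ℝ) :
    frobNorm (A * Y) ≤ specNorm A * frobNorm Y := by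
  rw [frobNorm, frobNorm, ← Real.sqrt_sq (specNorm_nonneg A), ← Real.sqrt_mul (sq_nonneg _)]
  apply Real.sqrt_le_sqrt
  rw [Finset.sum_comm]
  calc ∑ j, ∑ i, (A * Y) i j ^ 2
      = ∑ j, ∑ i, (A *ᵥ (fun k => Y k j)) i ^ 2 := by
        refine Finset.sum_congr rfl fun j _ => Finset.sum_congr rfl fun i _ => ?_
        rw [Matrix.mul_apply, Matrix.mulVec, dotProduct]
    _ ≤ ∑ j, specNorm A ^ 2 * ∑ i, Y i j ^ 2 :=
        Finset.sum_le_sum fun j _ => sum_sq_mulVec_le A _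
    _ = specNorm A ^ 2 * ∑ i, ∑ j, Y i j ^ 2 := by
        rw [← Finset.mul_sum, Finset.sum_comm]

variable [DecidableEq p]

lemma frob_mul_right (A' : Matrix p p ℝ) (hA' : A'.IsSymm) (Y : Matrix m p ℝ) :
    frobNorm (Y * A') ≤ specNorm A' * frobNorm Y := by
  calc frobNorm (Y * A') = frobNorm ((Y * A')ᵀ) := (frob_transpose _).symm
    _ = frobNorm (A' * Yᵀ) := by rw [Matrix.transpose_mul, hA'.eq]
    _ ≤ specNorm A' * frobNorm Yᵀ := frob_mul_left _ _
    _ = specNorm A' * frobNorm Y := by rw [frob_transpose]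

end FastPFPAux

set_option maxHeartbeats 1000000 in
open FastPFPAux Matrix Filter in
/-- The FastPFP iteration map `T(X) = (1−α)X + α·P_d(A X A' + λK)` is Lipschitz with constant
`1−α+αε` in the Frobenius norm; moreover, if `α > 0` and `ε < 1`, then `T` has a unique fixed
point `X*` and the iterates `Tᵗ(X⁽⁰⁾)` converge to `X*` for every initial matrix `X⁽⁰⁾`. -/
theorem fastPFP_map_lipschitz_and_fixedPoint (n n' : ℕ) (hn' : 0 < n') (hnn : n' ≤ n)
    (A : Matrix (Fin n) (Fin n) ℝ) (hA : A.IsSymm)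
    (A' : Matrix (Fin n') (Fin n') ℝ) (hA' : A'.IsSymm)
    (K : Matrix (Fin n) (Fin n') ℝ) (lam : ℝ) (hlam : 0 ≤ lam)
    (α : ℝ) (hα : α ∈ Set.Icc (0 : ℝ) 1) (ε : ℝ) (hε : 0 < ε)
    (hspec : specNorm A * specNorm A' < ε)
    (Pd : Matrix (Fin n) (Fin n') ℝ → Matrix (Fin n) (Fin n') ℝ)
    (hPd_mem : ∀ Y, Pd Y ∈ Omega n n')
    (hPd_min : ∀ Y, ∀ D ∈ Omega n n', frobNorm (Y - Pd Y) ≤ frobNorm (Y - D))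
    (T : Matrix (Fin n) (Fin n') ℝ → Matrix (Fin n) (Fin n') ℝ)
    (hT : ∀ Xm, T Xm = (1 - α) • Xm + α • Pd (A * Xm * A' + lam • K)) :
    (∀ X Y : Matrix (Fin n) (Fin n') ℝ,
        frobNorm (T X - T Y) ≤ (1 - α + α * ε) * frobNorm (X - Y)) ∧
      (0 < α → ε < 1 →
        ∃ Xstar : Matrix (Fin n) (Fin n') ℝ,
          T Xstar = Xstar ∧ (∀ Y, T Y = Y → Y = Xstar) ∧
            ∀ X0 : Matrix (Fin n) (Fin n') ℝ,
              Filter.Tendsto (fun t => frobNorm (T^[t] X0 - Xstar)) Filter.atTop (nhds 0)) := by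
  obtain ⟨hα0, hα1⟩ := hα
  -- The image of Omega in Euclidean space, and the transported projection.
  set S : Set (EuclideanSpace ℝ (Fin n × Fin n')) := eM '' Omega n n' with hS
  -- convexity of Omega
  have hOmega_conv : Convex ℝ (Omega n n') := by
    intro X hX Y hY a b ha hb hab
    refine ⟨fun i => ?_, fun j => ?_, fun i j => ?_⟩
    · have : ∑ j, (a • X + b • Y) i j = a * ∑ j, X i j + b * ∑ j, Y i j := by
        simp [Finset.mul_sum, Finset.sum_add_distrib]
      rw [this]
      calc a * ∑ j, X i j + b * ∑ j, Y i j ≤ a * 1 + b * 1 := by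
            gcongr
            · exact hX.1 i
            · exact hY.1 i
        _ = 1 := by rw [mul_one, mul_one, hab]
    · have : ∑ i, (a • X + b • Y) i j = a * ∑ i, X i j + b * ∑ i, Y i j := by
        simp [Finset.mul_sum, Finset.sum_add_distrib]
      rw [this, hX.2.1 j, hY.2.1 j, mul_one, mul_one, hab]
    · have : (a • X + b • Y) i j = a * X i j + b * Y i j := by
        simp [Matrix.add_apply]
      rw [this]
      exact add_nonneg (mul_nonneg ha (hX.2.2 i j)) (mul_nonneg hb (hY.2.2 i j))
  have hS_conv : Convex ℝ S := by
    intro x hx y hy a b ha hb hab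
    obtain ⟨X, hX, rfl⟩ := hx
    obtain ⟨Y, hY, rfl⟩ := hy
    refine ⟨a • X + b • Y, hOmega_conv hX hY ha hb hab, ?_⟩
    rw [eM_add, eM_smul, eM_smul]
  -- the transported projection
  set q : EuclideanSpace ℝ (Fin n × Fin n') → EuclideanSpace ℝ (Fin n × Fin n') :=
    fun y => eM (Pd (eM' y)) with hq
  have hq_mem : ∀ y, q y ∈ S := fun y => ⟨Pd (eM' y), hPd_mem _, rfl⟩
  have hq_min : ∀ y, ∀ w ∈ S, ‖y - q y‖ ≤ ‖y - w‖ := by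
    intro y w hw
    obtain ⟨D, hD, rfl⟩ := hw
    have h1 : y - q y = eM (eM' y - Pd (eM' y)) := by rw [eM_sub, eM_eM']
    have h2 : y - eM D = eM (eM' y - D) := by rw [eM_sub, eM_eM']
    rw [h1, h2, ← frob_eq, ← frob_eq]
    exact hPd_min _ D hD
  have hq_var : ∀ y, ∀ w ∈ S, inner ℝ (y - q y) (w - q y) ≤ (0:ℝ) := by
    intro y
    haveI : Nonempty S := ⟨⟨q y, hq_mem y⟩⟩
    have hinf : ‖y - q y‖ = ⨅ w : S, ‖y - w‖ := by
      refine le_antisymm (le_ciInf fun w => hq_min y w w.2) ?_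
      have hbdd : BddBelow (Set.range fun w : S => ‖y - (w : EuclideanSpace ℝ (Fin n × Fin n'))‖) := by
        refine ⟨0, ?_⟩
        rintro _ ⟨w, rfl⟩
        exact norm_nonneg _
      exact ciInf_le hbdd ⟨q y, hq_mem y⟩
    exact (norm_eq_iInf_iff_real_inner_le_zero hS_conv (hq_mem y)).1 hinf
  have hq_nonexp : ∀ y z, ‖q y - q z‖ ≤ ‖y - z‖ := by
    intro y z
    set u := q y - q z with hu
    have h1 : inner ℝ (y - q y) (q z - q y) ≤ (0:ℝ) := hq_var y _ (hq_mem z)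
    have h2 : inner ℝ (z - q z) (q y - q z) ≤ (0:ℝ) := hq_var z _ (hq_mem y)
    have expand : (inner ℝ u u : ℝ)
        = inner ℝ (y - z) u + inner ℝ (y - q y) (q z - q y) + inner ℝ (z - q z) (q y - q z) := by
      simp only [hu, inner_sub_left, inner_sub_right]
      ring
    have key : ‖u‖ ^ 2 ≤ ‖y - z‖ * ‖u‖ := by
      have h3 : (inner ℝ (y - z) u : ℝ) ≤ ‖y - z‖ * ‖u‖ := real_inner_le_norm _ _
      have h4 : (inner ℝ u u : ℝ) = ‖u‖ ^ 2 := real_inner_self_eq_norm_sq u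
      linarith [expand.symm ▸ (by linarith : (inner ℝ (y - z) u : ℝ) + inner ℝ (y - q y) (q z - q y)
        + inner ℝ (z - q z) (q y - q z) ≤ ‖y - z‖ * ‖u‖)]
    nlinarith [norm_nonneg u, norm_nonneg (y - z)]
  -- the Lipschitz estimate
  have hlip : ∀ X Y : Matrix (Fin n) (Fin n') ℝ,
      frobNorm (T X - T Y) ≤ (1 - α + α * ε) * frobNorm (X - Y) := by
    intro X Y
    set W1 := A * X * A' + lam • K with hW1
    set W2 := A * Y * A' + lam • K with hW2
    have hdiff : T X - T Y = (1 - α) • (X - Y) + α • (Pd W1 - Pd W2) := by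
      rw [hT X, hT Y]
      ext i j
      simp [Matrix.add_apply, Matrix.sub_apply, Matrix.smul_apply, smul_eq_mul]
      ring
    have hWdiff : W1 - W2 = A * ((X - Y) * A') := by
      rw [hW1, hW2, add_sub_add_right_eq_sub, Matrix.mul_assoc, Matrix.mul_assoc,
        ← Matrix.mul_sub, ← Matrix.sub_mul]
    have hPdiff : frobNorm (Pd W1 - Pd W2) ≤ ε * frobNorm (X - Y) := by
      have e1 : eM (Pd W1) = q (eM W1) := by simp only [hq, eM'_eM]
      have e2 : eM (Pd W2) = q (eM W2) := by simp only [hq, eM'_eM]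
      have := hq_nonexp (eM W1) (eM W2)
      rw [frob_eq, eM_sub, e1, e2]
      calc ‖q (eM W1) - q (eM W2)‖ ≤ ‖eM W1 - eM W2‖ := this
        _ = frobNorm (W1 - W2) := by rw [← eM_sub, ← frob_eq]
        _ = frobNorm (A * ((X - Y) * A')) := by rw [hWdiff]
        _ ≤ specNorm A * frobNorm ((X - Y) * A') := frob_mul_left _ _
        _ ≤ specNorm A * (specNorm A' * frobNorm (X - Y)) := by
            gcongr
            · exact specNorm_nonneg A
            · exact frob_mul_right _ hA' _
        _ = specNorm A * specNorm A' * frobNorm (X - Y) := by ring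
        _ ≤ ε * frobNorm (X - Y) := by
            gcongr
            exact frob_nonneg _
    calc frobNorm (T X - T Y)
        = ‖(1 - α) • eM (X - Y) + α • (eM (Pd W1) - eM (Pd W2))‖ := by
          rw [hdiff, frob_eq, eM_add, eM_smul, eM_smul, eM_sub, eM_sub]
      _ ≤ ‖(1 - α) • eM (X - Y)‖ + ‖α • (eM (Pd W1) - eM (Pd W2))‖ := norm_add_le _ _
      _ = (1 - α) * frobNorm (X - Y) + α * frobNorm (Pd W1 - Pd W2) := by
          rw [norm_smul, norm_smul, Real.norm_eq_abs, Real.norm_eq_abs,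
            abs_of_nonneg (by linarith), abs_of_nonneg hα0, ← frob_eq, ← eM_sub, ← frob_eq]
      _ ≤ (1 - α) * frobNorm (X - Y) + α * (ε * frobNorm (X - Y)) := by
          gcongr
      _ = (1 - α + α * ε) * frobNorm (X - Y) := by ring
  refine ⟨hlip, fun hαpos hε1 => ?_⟩
  -- contraction constant
  set k : ℝ := 1 - α + α * ε with hk
  have hk0 : 0 ≤ k := by nlinarith
  have hk1 : k < 1 := by nlinarith
  -- the transported map
  set Smap : EuclideanSpace ℝ (Fin n × Fin n') → EuclideanSpace ℝ (Fin n × Fin n') :=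
    fun y => eM (T (eM' y)) with hSmap
  have hSemi : Function.Semiconj eM T Smap := by
    intro Z
    simp only [hSmap, eM'_eM]
  have hSlip : LipschitzWith k.toNNReal Smap := by
    apply LipschitzWith.of_dist_le_mul
    intro x y
    rw [dist_eq_norm, dist_eq_norm, Real.coe_toNNReal _ hk0]
    have h1 : Smap x - Smap y = eM (T (eM' x) - T (eM' y)) := by rw [eM_sub]
    have h2 : x - y = eM (eM' x - eM' y) := by rw [eM_sub, eM_eM', eM_eM']
    rw [h1, h2, ← frob_eq, ← frob_eq]
    exact hlip _ _
  have hcontr : ContractingWith k.toNNReal Smap := by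
    refine ⟨?_, hSlip⟩
    rw [← Real.toNNReal_one]
    exact (Real.toNNReal_lt_toNNReal_iff one_pos).2 hk1
  have : Nonempty (EuclideanSpace ℝ (Fin n × Fin n')) := ⟨0⟩
  set ystar := ContractingWith.fixedPoint Smap hcontr with hystar
  have hfix : Smap ystar = ystar := hcontr.fixedPoint_isFixedPt
  refine ⟨eM' ystar, ?_, ?_, ?_⟩
  · -- fixed point
    have : eM (T (eM' ystar)) = ystar := hfix
    calc T (eM' ystar) = eM' (eM (T (eM' ystar))) := by rw [eM'_eM]
      _ = eM' ystar := by rw [this]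
  · -- uniqueness
    intro Y hY
    have hfixY : Smap (eM Y) = eM Y := by
      simp only [hSmap, eM'_eM, hY]
    have := hcontr.fixedPoint_unique hfixY
    rw [← hystar] at this
    calc Y = eM' (eM Y) := by rw [eM'_eM]
      _ = eM' ystar := by rw [this]
  · -- convergence
    intro X0
    have htend := hcontr.tendsto_iterate_fixedPoint (eM X0)
    rw [← hystar] at htend
    have htend2 := (tendsto_iff_dist_tendsto_zero).1 htend
    have hEq : ∀ t : ℕ, dist (Smap^[t] (eM X0)) ystar = frobNorm (T^[t] X0 - eM' ystar) := by
      intro t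
      rw [← (hSemi.iterate_right t) X0, dist_eq_norm]
      have h3 : eM (T^[t] X0) - ystar = eM (T^[t] X0 - eM' ystar) := by rw [eM_sub, eM_eM']
      rw [h3, ← frob_eq]
    simpa only [hEq] using htend2
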